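/- Let n ≥ 3 be an integer, k > 0, and χ ∈ (0, χ_max(k,n)). Define c₀ = inf{ h(p) : 1 < p ≤ n/2 } and c⁰ = sup{ h(p) : 1 < p ≤ n/2 }. Then 0 < c₀ ≤ c⁰ < 1. -/

import Mathlib

/-- Let `n ≥ 3` be an integer, `k > 0`, and `χ ∈ (0, χ_max(k,n))`
where `χ_max(k,n) = -(k-1)/2 + (1/2)·√((k-1)² + 8k/n)`.
Define `c₀ = inf { h(p) : 1 < p ≤ n/2 }` and `c⁰ = sup { h(p) : 1 < p ≤ n/2 }`,
with `h(p) = (p·χ·(1-k) + 2k)/(p·(1-k)² + 4k)`.  Then `0 < c₀ ≤ c⁰ < 1`. -/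
theorem stmt3 (n : ℕ) (hn : 3 ≤ n) (k χ : ℝ) (hk : 0 < k)
    (hχ0 : 0 < χ)
    (hχ1 : χ < -(k - 1) / 2 + (1 / 2) * Real.sqrt ((k - 1) ^ 2 + 8 * k / n)) :
    0 < sInf ((fun p : ℝ => (p * χ * (1 - k) + 2 * k) / (p * (1 - k) ^ 2 + 4 * k)) ''
          Set.Ioc 1 ((n : ℝ) / 2)) ∧
      sInf ((fun p : ℝ => (p * χ * (1 - k) + 2 * k) / (p * (1 - k) ^ 2 + 4 * k)) ''
          Set.Ioc 1 ((n : ℝ) / 2)) ≤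
        sSup ((fun p : ℝ => (p * χ * (1 - k) + 2 * k) / (p * (1 - k) ^ 2 + 4 * k)) ''
          Set.Ioc 1 ((n : ℝ) / 2)) ∧
      sSup ((fun p : ℝ => (p * χ * (1 - k) + 2 * k) / (p * (1 - k) ^ 2 + 4 * k)) ''
          Set.Ioc 1 ((n : ℝ) / 2)) < 1 := by
  set f : ℝ → ℝ := fun p : ℝ => (p * χ * (1 - k) + 2 * k) / (p * (1 - k) ^ 2 + 4 * k)
    with hf
  have hn0 : (0:ℝ) < n := by positivity
  have hn3 : (3:ℝ) ≤ n := by exact_mod_cast hn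
  have h12 : (1:ℝ) < (n:ℝ) / 2 := by linarith
  -- key inequality: χ(χ+k-1) < 2k/n, in the form n·χ·(χ+k-1) < 2k
  have hkey : (n:ℝ) * (χ * (χ + k - 1)) < 2 * k := by
    have hs : Real.sqrt ((k - 1) ^ 2 + 8 * k / n) ^ 2 = (k - 1) ^ 2 + 8 * k / n := by
      rw [Real.sq_sqrt]; positivity
    have h2 : 2 * χ + (k - 1) < Real.sqrt ((k - 1) ^ 2 + 8 * k / n) := by linarith
    rcases le_or_gt 0 (2 * χ + (k - 1)) with h | h
    · have hsq : (2 * χ + (k - 1)) ^ 2 < (k - 1) ^ 2 + 8 * k / n := by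
        nlinarith [Real.sqrt_nonneg ((k - 1) ^ 2 + 8 * k / n)]
      have := mul_lt_mul_of_pos_left hsq hn0
      have hne : (n:ℝ) ≠ 0 := ne_of_gt hn0
      field_simp at this
      nlinarith
    · have h3 : χ * (χ + k - 1) < 0 := by nlinarith
      have := mul_neg_of_pos_of_neg hn0 h3
      linarith
  -- denominator is positive for p ≥ 0
  have hden : ∀ p : ℝ, 0 ≤ p → 0 < p * (1 - k) ^ 2 + 4 * k := by
    intro p hp
    have : 0 ≤ p * (1 - k) ^ 2 := by positivity
    linarith
  -- pointwise bounds on [1, n/2]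
  have hB : ∀ p ∈ Set.Icc (1:ℝ) ((n:ℝ) / 2), p * χ * (χ + k - 1) < k := by
    rintro p ⟨hp1, hp2⟩
    rcases le_or_gt 0 (χ * (χ + k - 1)) with h | h
    · nlinarith
    · nlinarith
  have hpos : ∀ p ∈ Set.Icc (1:ℝ) ((n:ℝ) / 2), 0 < f p := by
    rintro p hp
    obtain ⟨hp1, hp2⟩ := hp
    have hb := hB p ⟨hp1, hp2⟩
    have hd := hden p (by linarith)
    apply div_pos _ hd
    nlinarith [mul_nonneg (by linarith : (0:ℝ) ≤ p) (sq_nonneg χ)]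
  have hlt1 : ∀ p ∈ Set.Icc (1:ℝ) ((n:ℝ) / 2), f p < 1 := by
    rintro p hp
    obtain ⟨hp1, hp2⟩ := hp
    have hb := hB p ⟨hp1, hp2⟩
    have hd := hden p (by linarith)
    rw [div_lt_one hd]
    nlinarith [mul_nonneg (by linarith : (0:ℝ) ≤ p) (sq_nonneg (χ + k - 1))]
  -- continuity and compactness
  have hcont : ContinuousOn f (Set.Icc (1:ℝ) ((n:ℝ) / 2)) := by
    apply ContinuousOn.div
    · fun_prop
    · fun_prop
    · intro p hp
      exact ne_of_gt (hden p (by linarith [hp.1]))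
  have hK : IsCompact (f '' Set.Icc (1:ℝ) ((n:ℝ) / 2)) :=
    isCompact_Icc.image_of_continuousOn hcont
  have hKne : (f '' Set.Icc (1:ℝ) ((n:ℝ) / 2)).Nonempty :=
    ⟨f 1, Set.mem_image_of_mem f ⟨le_refl 1, le_of_lt h12⟩⟩
  have hSsub : f '' Set.Ioc (1:ℝ) ((n:ℝ) / 2) ⊆ f '' Set.Icc (1:ℝ) ((n:ℝ) / 2) :=
    Set.image_mono (f := f) Set.Ioc_subset_Icc_self
  have hSne : (f '' Set.Ioc (1:ℝ) ((n:ℝ) / 2)).Nonempty :=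
    ⟨f ((n:ℝ)/2), Set.mem_image_of_mem f ⟨h12, le_refl _⟩⟩
  have hbddB : BddBelow (f '' Set.Icc (1:ℝ) ((n:ℝ) / 2)) := hK.bddBelow
  have hbddA : BddAbove (f '' Set.Icc (1:ℝ) ((n:ℝ) / 2)) := hK.bddAbove
  have hSbB : BddBelow (f '' Set.Ioc (1:ℝ) ((n:ℝ) / 2)) := hbddB.mono hSsub
  have hSbA : BddAbove (f '' Set.Ioc (1:ℝ) ((n:ℝ) / 2)) := hbddA.mono hSsub
  have hInfK : 0 < sInf (f '' Set.Icc (1:ℝ) ((n:ℝ) / 2)) := by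
    obtain ⟨p, hp, hfp⟩ := hK.sInf_mem hKne
    rw [← hfp]
    exact hpos p hp
  have hSupK : sSup (f '' Set.Icc (1:ℝ) ((n:ℝ) / 2)) < 1 := by
    obtain ⟨p, hp, hfp⟩ := hK.sSup_mem hKne
    rw [← hfp]
    exact hlt1 p hp
  have h1 : sInf (f '' Set.Icc (1:ℝ) ((n:ℝ) / 2)) ≤ sInf (f '' Set.Ioc (1:ℝ) ((n:ℝ) / 2)) :=
    csInf_le_csInf hbddB hSne hSsub
  have h2 : sSup (f '' Set.Ioc (1:ℝ) ((n:ℝ) / 2)) ≤ sSup (f '' Set.Icc (1:ℝ) ((n:ℝ) / 2)) :=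
    csSup_le_csSup hbddA hSne hSsub
  refine ⟨lt_of_lt_of_le hInfK h1, csInf_le_csSup hSne hSbB hSbA, lt_of_le_of_lt h2 hSupK⟩
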